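/- arXiv:1611.09522 — 5 statements merged into one kernel-verified Lean document; each statement's English description precedes it below -/
import Mathlib

section
/- Let (X,ρ) be a metric space, F : X → (−∞,+∞], r > 0 and y ∈ X. If x_r minimizes x ↦ F(x) + ρ(x,y)²/(2r) over X and F(x_r) < ∞, then the descending slope of F at x_r satisfies limsup_{z→x_r} max{F(x_r) − F(z), 0}/ρ(x_r,z) ≤ ρ(x_r,y)/r. -/
open MeasureTheory Filter Topology Set
open scoped ENNReal NNReal

/-- The descending slope of `F : X → (−∞,+∞]` at `x`. -/
noncomputable def descSlope {X : Type*} [MetricSpace X] (F : X → EReal) (x : X) : ℝ≥0∞ :=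
  Filter.limsup (fun z => ENNReal.ofReal ((max (F x - F z) 0).toReal / dist x z)) (𝓝[≠] x)

/-- The slope estimate at a minimizer of the penalized functional:
if `x_r` minimizes `x ↦ F(x) + ρ(x,y)²/(2r)` and `F(x_r) < ∞`, then the descending slope
of `F` at `x_r` is at most `ρ(x_r,y)/r`. -/
theorem slope_bound_at_minimizer {X : Type*} [MetricSpace X]
    (F : X → EReal) (hbot : ∀ z : X, F z ≠ ⊥)
    (r : ℝ) (hr : 0 < r) (y xr : X)
    (hmin : ∀ z : X, F xr + (((dist xr y)^2 / (2*r) : ℝ) : EReal)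
      ≤ F z + (((dist z y)^2 / (2*r) : ℝ) : EReal))
    (hfin : F xr < ⊤) :
    descSlope F xr ≤ ENNReal.ofReal (dist xr y / r) := by
  set a := (F xr).toReal with ha
  have hxr_eq : F xr = (a : EReal) := (EReal.coe_toReal (ne_of_lt hfin) (hbot xr)).symm
  -- pointwise bound
  have key : ∀ z : X, z ≠ xr →
      (max (F xr - F z) 0).toReal / dist xr z ≤ (dist z y + dist xr y) / (2*r) := by
    intro z hz
    have hdz : (0:ℝ) < dist xr z := dist_pos.2 (Ne.symm hz)
    have hsum : (0:ℝ) ≤ dist z y + dist xr y := by positivity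
    by_cases hFz : F z = ⊤
    · rw [hxr_eq, hFz, EReal.sub_top]
      have : (max (⊥ : EReal) 0).toReal = 0 := by simp
      rw [this, zero_div]
      positivity
    · have hb : F z = (((F z).toReal : ℝ) : EReal) := (EReal.coe_toReal hFz (hbot z)).symm
      set b := (F z).toReal with hbdef
      have h1 : a + (dist xr y)^2 / (2*r) ≤ b + (dist z y)^2 / (2*r) := by
        have h := hmin z
        rw [hxr_eq, hb] at h
        exact_mod_cast h
      have h2 : dist z y - dist xr y ≤ dist xr z := by
        have := dist_triangle z xr y
        rw [dist_comm z xr] at this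
        linarith
      have h3 : max (a - b) 0 ≤ dist xr z * ((dist z y + dist xr y) / (2*r)) := by
        have h2r : (0:ℝ) < 2*r := by positivity
        have h1' : (a - b) * (2*r) ≤ dist z y ^ 2 - dist xr y ^ 2 := by
          have hm := mul_le_mul_of_nonneg_right h1 h2r.le
          field_simp at hm
          nlinarith [hm]
        have h4 : (a - b) * (2*r) ≤ dist xr z * (dist z y + dist xr y) := by
          nlinarith [mul_le_mul_of_nonneg_right h2 hsum]
        rcases le_total (a - b) 0 with h | h
        · rw [max_eq_right h]; positivity
        · rw [max_eq_left h]
          calc a - b = ((a - b) * (2*r)) / (2*r) := by field_simp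
            _ ≤ (dist xr z * (dist z y + dist xr y)) / (2*r) := by gcongr
            _ = dist xr z * ((dist z y + dist xr y) / (2*r)) := by ring
      have hmax : (max (F xr - F z) 0).toReal = max (a - b) 0 := by
        rw [hxr_eq, hb]
        rw [show ((a : EReal) - (b : EReal)) = ((a - b : ℝ) : EReal) by norm_cast]
        rw [show (0 : EReal) = ((0:ℝ) : EReal) by norm_cast]
        rw [show max ((a - b : ℝ) : EReal) ((0:ℝ) : EReal) = ((max (a-b) 0 : ℝ) : EReal) from
          (EReal.coe_strictMono.monotone.map_max).symm]
        exact EReal.toReal_coe _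
      rw [hmax, div_le_iff₀ hdz]
      linarith [h3]
  refine ENNReal.le_of_forall_pos_le_add fun ε hε _ => ?_
  have hcont : Tendsto (fun z : X => (dist z y + dist xr y) / (2*r)) (𝓝[≠] xr)
      (𝓝 (dist xr y / r)) := by
    have hc : Continuous (fun z : X => (dist z y + dist xr y) / (2*r)) := by
      exact ((continuous_id.dist continuous_const).add continuous_const).div_const _
    have := (hc.tendsto xr).mono_left (nhdsWithin_le_nhds (s := {xr}ᶜ))
    have heq : (dist xr y + dist xr y) / (2*r) = dist xr y / r := by
      field_simp; ring
    rwa [heq] at this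
  have hev : ∀ᶠ z in 𝓝[≠] xr, (dist z y + dist xr y) / (2*r) < dist xr y / r + ε := by
    apply hcont.eventually_lt_const
    have : (0:ℝ) < ε := hε
    linarith
  apply Filter.limsup_le_of_le (by isBoundedDefault)
  filter_upwards [hev, self_mem_nhdsWithin] with z h1 h2
  calc ENNReal.ofReal ((max (F xr - F z) 0).toReal / dist xr z)
      ≤ ENNReal.ofReal ((dist z y + dist xr y) / (2*r)) :=
        ENNReal.ofReal_le_ofReal (key z h2)
    _ ≤ ENNReal.ofReal (dist xr y / r + ε) := ENNReal.ofReal_le_ofReal h1.le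
    _ ≤ ENNReal.ofReal (dist xr y / r) + ENNReal.ofReal ε := ENNReal.ofReal_add_le
    _ = ENNReal.ofReal (dist xr y / r) + ε := by rw [ENNReal.ofReal_coe_nnreal]
end

section
/- Let (X,ρ) be a metric space and (F_r)_{r∈(0,R)} a family of functionals F_r : X → (−∞,+∞] with common domain such that |F_{r_1}(x) − F_{r_2}(x)| ≤ L*|r_1 − r_2| for all r_1,r_2 ∈ (0,R) and all x in the domain. Fix y ∈ X, and for each r ∈ (0,R) let x_r be a minimizer of x ↦ F_r(x) + ρ(x,y)²/(2r). Then for all 0 < r_1 < r_2 < R: ρ(x_{r_1},y)² ≤ ρ(x_{r_2},y)² + 4 r_1 r_2 L*. -/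
open MeasureTheory Filter Topology Set
open scoped ENNReal NNReal

/-- Monotonicity (up to an error `4 r₁ r₂ L*`) of the distance of the
minimizers of the penalized problems to the base point `y`, for a family of functionals
with common domain that is Lipschitz in the parameter. -/
theorem minimizer_distance_monotone {X : Type*} [MetricSpace X]
    (R Lstar : ℝ) (hR : 0 < R) (hL : 0 ≤ Lstar)
    (F : ℝ → X → EReal) (dom : Set X) (hdom : dom.Nonempty)
    (hfin : ∀ r ∈ Set.Ioo (0:ℝ) R, ∀ x : X, F r x < ⊤ ↔ x ∈ dom)
    (hbot : ∀ r ∈ Set.Ioo (0:ℝ) R, ∀ x : X, F r x ≠ ⊥)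
    (hlip : ∀ r₁ ∈ Set.Ioo (0:ℝ) R, ∀ r₂ ∈ Set.Ioo (0:ℝ) R, ∀ x ∈ dom,
      |(F r₁ x).toReal - (F r₂ x).toReal| ≤ Lstar * |r₁ - r₂|)
    (y : X) (xmin : ℝ → X)
    (hxmin : ∀ r ∈ Set.Ioo (0:ℝ) R, ∀ z : X,
      F r (xmin r) + (((dist (xmin r) y)^2 / (2*r) : ℝ) : EReal)
        ≤ F r z + (((dist z y)^2 / (2*r) : ℝ) : EReal)) :
    ∀ r₁ ∈ Set.Ioo (0:ℝ) R, ∀ r₂ ∈ Set.Ioo (0:ℝ) R, r₁ < r₂ →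
      (dist (xmin r₁) y)^2 ≤ (dist (xmin r₂) y)^2 + 4 * r₁ * r₂ * Lstar := by
  -- first: each minimizer lies in the domain
  have hmem : ∀ r ∈ Set.Ioo (0:ℝ) R, xmin r ∈ dom := by
    intro r hr
    obtain ⟨z, hz⟩ := hdom
    have h1 := hxmin r hr z
    have hz' : F r z < ⊤ := (hfin r hr z).mpr hz
    have hz'' : F r z + (((dist z y)^2 / (2*r) : ℝ) : EReal) < ⊤ := by
      lift F r z to ℝ using ⟨hz'.ne, hbot r hr z⟩ with a
      rw [← EReal.coe_add]
      exact EReal.coe_lt_top _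
    have hlt := lt_of_le_of_lt h1 hz''
    have : F r (xmin r) < ⊤ := by
      by_contra h'
      push_neg at h'
      have : F r (xmin r) = ⊤ := top_le_iff.mp h'
      rw [this] at hlt
      simp at hlt
    exact (hfin r hr _).mp this
  intro r₁ hr₁ r₂ hr₂ hlt
  set x₁ := xmin r₁
  set x₂ := xmin r₂
  have hx₁ := hmem r₁ hr₁
  have hx₂ := hmem r₂ hr₂
  -- real-valued versions of the functionals at the two points
  have fin : ∀ r ∈ Set.Ioo (0:ℝ) R, ∀ x ∈ dom, F r x = ((F r x).toReal : EReal) := by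
    intro r hr x hx
    exact (EReal.coe_toReal ((hfin r hr x).mpr hx).ne (hbot r hr x)).symm
  set a₁ := (F r₁ x₁).toReal
  set b₁ := (F r₁ x₂).toReal
  set a₂ := (F r₂ x₁).toReal
  set b₂ := (F r₂ x₂).toReal
  set d₁ := (dist x₁ y)^2
  set d₂ := (dist x₂ y)^2
  have hmin1 : a₁ + d₁ / (2*r₁) ≤ b₁ + d₂ / (2*r₁) := by
    have h := hxmin r₁ hr₁ x₂
    rw [fin r₁ hr₁ x₁ hx₁, fin r₁ hr₁ x₂ hx₂, ← EReal.coe_add, ← EReal.coe_add,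
      EReal.coe_le_coe_iff] at h
    exact h
  have hmin2 : b₂ + d₂ / (2*r₂) ≤ a₂ + d₁ / (2*r₂) := by
    have h := hxmin r₂ hr₂ x₁
    rw [fin r₂ hr₂ x₂ hx₂, fin r₂ hr₂ x₁ hx₁, ← EReal.coe_add, ← EReal.coe_add,
      EReal.coe_le_coe_iff] at h
    exact h
  have hl1 : |a₁ - a₂| ≤ Lstar * |r₁ - r₂| := hlip r₁ hr₁ r₂ hr₂ x₁ hx₁
  have hl2 : |b₁ - b₂| ≤ Lstar * |r₁ - r₂| := hlip r₁ hr₁ r₂ hr₂ x₂ hx₂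
  rw [abs_of_neg (by linarith : r₁ - r₂ < 0)] at hl1 hl2
  have hl1' : a₂ - a₁ ≤ Lstar * (r₂ - r₁) := by
    have h := neg_le_of_abs_le hl1; linarith
  have hl2' : b₁ - b₂ ≤ Lstar * (r₂ - r₁) := by
    have h := le_of_abs_le hl2; linarith
  have h01 : (0:ℝ) < r₁ := hr₁.1
  have h02 : (0:ℝ) < r₂ := hr₂.1
  have key1 : d₁ - d₂ ≤ (b₁ - a₁) * (2 * r₁) := by
    rw [← div_le_iff₀ (by linarith : (0:ℝ) < 2*r₁), sub_div]
    linarith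
  have key2 : d₂ - d₁ ≤ (a₂ - b₂) * (2 * r₂) := by
    rw [← div_le_iff₀ (by linarith : (0:ℝ) < 2*r₂), sub_div]
    linarith
  nlinarith [mul_le_mul_of_nonneg_left key1 h02.le,
    mul_le_mul_of_nonneg_left key2 h01.le,
    mul_le_mul_of_nonneg_left hl1' (by positivity : (0:ℝ) ≤ 2*r₁*r₂),
    mul_le_mul_of_nonneg_left hl2' (by positivity : (0:ℝ) ≤ 2*r₁*r₂)]
end

section
/- Let E be admissible, fix s ∈ [0,T), y ∈ X, and a metric ρ on X that is bi-Lipschitz equivalent to the metrics d_t. For r ∈ (0,T−s) set J_r(y) := inf_x { E_{s+r}(x) + ρ(x,y)²/(2r) } and assume the infimum is attained at some x_r for every r. Then r ↦ J_r(y) is locally Lipschitz on (0,T−s), and for almost every r ∈ (0,T−s): (d/dr) J_r(y) = −ρ(x_r,y)²/(2r²) + (∂_r E_{s+r})(x_r). -/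
open MeasureTheory Filter Topology Set
open scoped ENNReal NNReal

/-- A time-dependent family of complete separable geodesic metrics `d t` (`t ∈ [0,T]`) on a
topological space `X`, all inducing the given topology, whose mutual deviation is
log-Lipschitz in time with constant `L`. -/
structure DynMetric (X : Type*) [TopologicalSpace X] (T : ℝ) (L : ℝ) : Type _ where
  d : ℝ → X → X → ℝ
  d_self : ∀ t ∈ Set.Icc (0:ℝ) T, ∀ x : X, d t x x = 0
  d_pos : ∀ t ∈ Set.Icc (0:ℝ) T, ∀ x y : X, x ≠ y → 0 < d t x y
  d_symm : ∀ t ∈ Set.Icc (0:ℝ) T, ∀ x y : X, d t x y = d t y x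
  d_triangle : ∀ t ∈ Set.Icc (0:ℝ) T, ∀ x y z : X, d t x z ≤ d t x y + d t y z
  nhds_basis : ∀ t ∈ Set.Icc (0:ℝ) T, ∀ x : X,
    (𝓝 x).HasBasis (fun ε : ℝ => 0 < ε) (fun ε => {y : X | d t x y < ε})
  complete : ∀ t ∈ Set.Icc (0:ℝ) T, ∀ u : ℕ → X,
    (∀ ε : ℝ, 0 < ε → ∃ N : ℕ, ∀ m ≥ N, ∀ n ≥ N, d t (u m) (u n) < ε) →
    ∃ x : X, Tendsto u atTop (𝓝 x)
  separable : ∃ s : Set X, s.Countable ∧ Dense s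
  geodesic : ∀ t ∈ Set.Icc (0:ℝ) T, ∀ x y : X, ∃ γ : ℝ → X, γ 0 = x ∧ γ 1 = y ∧
    ∀ a ∈ Set.Icc (0:ℝ) 1, ∀ b ∈ Set.Icc (0:ℝ) 1, d t (γ a) (γ b) = |a - b| * d t x y
  logLip : ∀ s ∈ Set.Icc (0:ℝ) T, ∀ t ∈ Set.Icc (0:ℝ) T, ∀ x y : X, x ≠ y →
    |Real.log (d t x y / d s x y)| ≤ L * |t - s|

/-- The (descending) metricSlope of `F` at `x` with respect to the distance `ρ`. -/
noncomputable def metricSlope {X : Type*} [TopologicalSpace X] (ρ : X → X → ℝ) (F : X → EReal)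
    (x : X) : ℝ≥0∞ :=
  Filter.limsup (fun y => ENNReal.ofReal ((max (F x - F y) 0).toReal / ρ x y)) (𝓝[≠] x)

/-- An admissible time-dependent energy functional `E : [0,T] × X → (−∞,+∞]`:
time-independent nonempty domain, uniform lower bound, lower semicontinuity,
uniform Lipschitz dependence on time on the domain, and a common (full-measure) set of
differentiability points in time, with derivative `deriv`. -/
structure Admissible {X : Type*} [TopologicalSpace X] (T : ℝ) (E : ℝ → X → EReal) : Type _ where
  dom : Set X
  dom_nonempty : dom.Nonempty
  finite_iff : ∀ t ∈ Set.Icc (0:ℝ) T, ∀ x : X, E t x < ⊤ ↔ x ∈ dom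
  ne_bot : ∀ t ∈ Set.Icc (0:ℝ) T, ∀ x : X, E t x ≠ ⊥
  lowBound : ℝ
  le_energy : ∀ t ∈ Set.Icc (0:ℝ) T, ∀ x : X, (lowBound : EReal) ≤ E t x
  lsc : ∀ t ∈ Set.Icc (0:ℝ) T, LowerSemicontinuous (E t)
  lipT : ℝ
  lipT_nonneg : 0 ≤ lipT
  lip : ∀ s ∈ Set.Icc (0:ℝ) T, ∀ t ∈ Set.Icc (0:ℝ) T, ∀ x ∈ dom,
    |(E t x).toReal - (E s x).toReal| ≤ lipT * |t - s|
  deriv : ℝ → X → ℝ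
  diffSet : Set ℝ
  diffSet_subset : diffSet ⊆ Set.Icc (0:ℝ) T
  diffSet_ae : volume (Set.Icc (0:ℝ) T \ diffSet) = 0
  hasDeriv : ∀ t ∈ diffSet, ∀ x ∈ dom,
    HasDerivWithinAt (fun r => (E r x).toReal) (deriv t x) (Set.Icc (0:ℝ) T) t


/-- Local Lipschitz continuity and a.e. differentiability of the Moreau–
Yosida type value function `r ↦ J_r(y)`, with the explicit formula for its derivative. -/
theorem value_function_derivative {X : Type*} [TopologicalSpace X] {T L : ℝ} (hT : 0 < T)
    (hL : 0 ≤ L) (D : DynMetric X T L) (E : ℝ → X → EReal) (A : Admissible T E)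
    (ρ : X → X → ℝ)
    (hρ0 : ∀ x : X, ρ x x = 0) (hρpos : ∀ x y : X, x ≠ y → 0 < ρ x y)
    (hρsymm : ∀ x y : X, ρ x y = ρ y x)
    (hρtri : ∀ x y z : X, ρ x z ≤ ρ x y + ρ y z)
    (c C : ℝ) (hc : 0 < c) (hC : 0 < C)
    (hequiv : ∀ t ∈ Set.Icc (0:ℝ) T, ∀ x y : X,
      c * D.d t x y ≤ ρ x y ∧ ρ x y ≤ C * D.d t x y)
    (s : ℝ) (hs : s ∈ Set.Ico (0:ℝ) T) (y : X) (xmin : ℝ → X)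
    (hxmin : ∀ r ∈ Set.Ioo (0:ℝ) (T - s), ∀ z : X,
      E (s+r) (xmin r) + (((ρ (xmin r) y)^2 / (2*r) : ℝ) : EReal)
        ≤ E (s+r) z + (((ρ z y)^2 / (2*r) : ℝ) : EReal)) :
    (∀ a b : ℝ, 0 < a → a ≤ b → b < T - s → ∃ K : ℝ≥0, LipschitzOnWith K
      (fun r => (E (s+r) (xmin r)).toReal + (ρ (xmin r) y)^2 / (2*r)) (Set.Icc a b)) ∧
    ∀ᵐ r ∂(volume.restrict (Set.Ioo (0:ℝ) (T - s))),
      HasDerivAt (fun r' => (E (s+r') (xmin r')).toReal + (ρ (xmin r') y)^2 / (2*r'))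
        (-(ρ (xmin r) y)^2 / (2*r^2) + A.deriv (s+r) (xmin r)) r := by
  classical
  obtain ⟨hs0, hsT⟩ := hs
  set l : ℝ := T - s with hl_def
  have hl : 0 < l := sub_pos.mpr hsT
  obtain ⟨x₀, hx₀⟩ := A.dom_nonempty
  have hIcc : ∀ r ∈ Set.Ioo (0:ℝ) l, s + r ∈ Set.Icc (0:ℝ) T := by
    rintro r ⟨hr0, hrl⟩
    constructor <;> simp only [hl_def] at hrl <;> linarith
  have hIoo : ∀ r ∈ Set.Ioo (0:ℝ) l, s + r ∈ Set.Ioo (0:ℝ) T := by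
    rintro r ⟨hr0, hrl⟩
    constructor <;> simp only [hl_def] at hrl <;> linarith
  have hne : ∀ t ∈ Set.Icc (0:ℝ) T, ∀ x ∈ A.dom, E t x = (((E t x).toReal : ℝ) : EReal) := by
    intro t ht x hx
    exact (EReal.coe_toReal ((A.finite_iff t ht x).mpr hx).ne (A.ne_bot t ht x)).symm
  have hdom : ∀ r ∈ Set.Ioo (0:ℝ) l, xmin r ∈ A.dom := by
    intro r hr
    have h := hxmin r hr x₀
    rw [hne _ (hIcc r hr) _ hx₀, ← EReal.coe_add] at h
    refine (A.finite_iff _ (hIcc r hr) _).mp ?_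
    by_contra htop
    rw [not_lt, top_le_iff] at htop
    rw [htop, EReal.top_add_coe] at h
    exact EReal.coe_ne_top _ (top_le_iff.mp h)
  have hmin : ∀ r ∈ Set.Ioo (0:ℝ) l, ∀ z ∈ A.dom,
      (E (s+r) (xmin r)).toReal + ρ (xmin r) y ^ 2 / (2*r)
        ≤ (E (s+r) z).toReal + ρ z y ^ 2 / (2*r) := by
    intro r hr z hz
    have h := hxmin r hr z
    rw [hne _ (hIcc r hr) _ (hdom r hr), hne _ (hIcc r hr) _ hz, ← EReal.coe_add,
      ← EReal.coe_add, EReal.coe_le_coe_iff] at h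
    exact h
  have hlow : ∀ r ∈ Set.Ioo (0:ℝ) l, A.lowBound ≤ (E (s+r) (xmin r)).toReal := by
    intro r hr
    have h := A.le_energy _ (hIcc r hr) (xmin r)
    rw [hne _ (hIcc r hr) _ (hdom r hr)] at h
    exact_mod_cast h
  set M : ℝ := (E s x₀).toReal + A.lipT * T with hM_def
  have hsIcc : s ∈ Set.Icc (0:ℝ) T := ⟨hs0, hsT.le⟩
  have hM : ∀ t ∈ Set.Icc (0:ℝ) T, (E t x₀).toReal ≤ M := by
    intro t ht
    have h := A.lip s hsIcc t ht x₀ hx₀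
    have h2 : |t - s| ≤ T := by
      rw [abs_le]; exact ⟨by linarith [ht.1], by linarith [ht.2]⟩
    have h3 := le_trans (le_abs_self _) h
    have h4 : A.lipT * |t - s| ≤ A.lipT * T := mul_le_mul_of_nonneg_left h2 A.lipT_nonneg
    simp only [hM_def]; linarith
  set B : ℝ := 2*T*|M - A.lowBound| + ρ x₀ y ^ 2 with hB_def
  have hB0 : 0 ≤ B := by
    have := abs_nonneg (M - A.lowBound)
    have := sq_nonneg (ρ x₀ y)
    have := hT.le
    simp only [hB_def]; nlinarith
  have hB : ∀ r ∈ Set.Ioo (0:ℝ) l, ρ (xmin r) y ^ 2 ≤ B := by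
    intro r hr
    have h1 := hmin r hr x₀ hx₀
    have h2 := hlow r hr
    have h3 := hM (s+r) (hIcc r hr)
    have hr0 : 0 < r := hr.1
    have hrT : r ≤ T := by have := hr.2; simp only [hl_def] at this; linarith
    have h2r : (0:ℝ) < 2*r := by linarith
    have h4 : ρ (xmin r) y ^ 2 / (2*r) ≤ (M - A.lowBound) + ρ x₀ y ^ 2 / (2*r) := by
      linarith
    have h5 := mul_le_mul_of_nonneg_right h4 h2r.le
    rw [div_mul_cancel₀ _ h2r.ne', add_mul, div_mul_cancel₀ _ h2r.ne'] at h5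
    have h6 : (M - A.lowBound) * (2*r) ≤ 2*T*|M - A.lowBound| := by
      nlinarith [le_abs_self (M - A.lowBound), abs_nonneg (M - A.lowBound)]
    simp only [hB_def]; linarith
  set J : ℝ → ℝ := fun r => (E (s+r) (xmin r)).toReal + ρ (xmin r) y ^ 2 / (2*r) with hJ_def
  have hcomp : ∀ r ∈ Set.Ioo (0:ℝ) l, ∀ r' ∈ Set.Ioo (0:ℝ) l,
      J r' - J r ≤ A.lipT * |r' - r| + B * |r' - r| / (2*r*r') := by
    intro r hr r' hr'
    have h1 : J r' ≤ (E (s+r') (xmin r)).toReal + ρ (xmin r) y ^ 2 / (2*r') :=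
      hmin r' hr' (xmin r) (hdom r hr)
    have h2 : (E (s+r') (xmin r)).toReal - (E (s+r) (xmin r)).toReal ≤ A.lipT * |r' - r| := by
      have h := A.lip (s+r) (hIcc r hr) (s+r') (hIcc r' hr') (xmin r) (hdom r hr)
      have he : s + r' - (s + r) = r' - r := by ring
      rw [he] at h
      exact le_trans (le_abs_self _) h
    have hd : (0:ℝ) < 2*r*r' := by
      have := hr.1; have := hr'.1; positivity
    have h3 : ρ (xmin r) y ^ 2 / (2*r') - ρ (xmin r) y ^ 2 / (2*r)
        ≤ B * |r' - r| / (2*r*r') := by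
      have hrr : ρ (xmin r) y ^ 2 / (2*r') - ρ (xmin r) y ^ 2 / (2*r)
          = ρ (xmin r) y ^ 2 * ((r - r') / (2*r*r')) := by
        field_simp [hr.1.ne', hr'.1.ne']
      rw [hrr]
      rcases le_total ((r - r') / (2*r*r')) 0 with h | h
      · have hle0 : ρ (xmin r) y ^ 2 * ((r - r') / (2*r*r')) ≤ 0 :=
          mul_nonpos_of_nonneg_of_nonpos (sq_nonneg _) h
        have hge0 : (0:ℝ) ≤ B * |r' - r| / (2*r*r') := by positivity
        linarith
      · have hq : (r - r') / (2*r*r') ≤ |r' - r| / (2*r*r') := by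
          have hnum : r - r' ≤ |r' - r| := le_trans (le_abs_self _) (le_of_eq (abs_sub_comm r r'))
          gcongr
        calc ρ (xmin r) y ^ 2 * ((r - r') / (2*r*r'))
            ≤ B * ((r - r') / (2*r*r')) := mul_le_mul_of_nonneg_right (hB r hr) h
          _ ≤ B * (|r' - r| / (2*r*r')) := mul_le_mul_of_nonneg_left hq hB0
          _ = B * |r' - r| / (2*r*r') := (mul_div_assoc _ _ _).symm
    have hJr' : J r' - J r ≤
        ((E (s+r') (xmin r)).toReal - (E (s+r) (xmin r)).toReal)
        + (ρ (xmin r) y ^ 2 / (2*r') - ρ (xmin r) y ^ 2 / (2*r)) := by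
      have : J r = (E (s+r) (xmin r)).toReal + ρ (xmin r) y ^ 2 / (2*r) := rfl
      linarith
    linarith
  have hLip : ∀ a b : ℝ, 0 < a → a ≤ b → b < l →
      LipschitzOnWith (Real.toNNReal (A.lipT + B / (2*a^2))) J (Set.Icc a b) := by
    intro a b ha hab hbl
    rw [lipschitzOnWith_iff_dist_le_mul]
    intro r hrI r' hr'I
    have hrm : r ∈ Set.Ioo (0:ℝ) l := ⟨lt_of_lt_of_le ha hrI.1, lt_of_le_of_lt hrI.2 hbl⟩
    have hr'm : r' ∈ Set.Ioo (0:ℝ) l := ⟨lt_of_lt_of_le ha hr'I.1, lt_of_le_of_lt hr'I.2 hbl⟩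
    rw [Real.dist_eq, Real.dist_eq]
    have hK : A.lipT + B/(2*a^2) ≤ (Real.toNNReal (A.lipT + B/(2*a^2)) : ℝ) :=
      Real.le_coe_toNNReal _
    have hbound : ∀ u v : ℝ, u ∈ Set.Ioo (0:ℝ) l → v ∈ Set.Ioo (0:ℝ) l → a ≤ u → a ≤ v →
        J v - J u ≤ (A.lipT + B/(2*a^2)) * |v - u| := by
      intro u v hu hv hau hav
      have h1 := hcomp u hu v hv
      have h4 : (0:ℝ) < 2*a^2 := by positivity
      have h3 : 2*a^2 ≤ 2*u*v := by nlinarith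
      have h2 : B * |v - u| / (2*u*v) ≤ B/(2*a^2) * |v - u| := by
        calc B * |v - u| / (2*u*v) ≤ B * |v - u| / (2*a^2) := by
              have hnum : (0:ℝ) ≤ B * |v - u| := by positivity
              gcongr
          _ = B/(2*a^2) * |v - u| := by ring
      have h5 : (A.lipT + B/(2*a^2)) * |v - u| = A.lipT * |v - u| + B/(2*a^2) * |v - u| :=
        add_mul _ _ _
      linarith
    rw [abs_sub_le_iff]
    have hKmul : ∀ x : ℝ, (A.lipT + B/(2*a^2)) * |x|
        ≤ (Real.toNNReal (A.lipT + B/(2*a^2)) : ℝ) * |x| := fun x =>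
      mul_le_mul_of_nonneg_right hK (abs_nonneg x)
    constructor
    · calc J r - J r' ≤ (A.lipT + B/(2*a^2)) * |r - r'| := hbound r' r hr'm hrm hr'I.1 hrI.1
        _ ≤ _ := hKmul _
    · calc J r' - J r ≤ (A.lipT + B/(2*a^2)) * |r' - r| := hbound r r' hrm hr'm hrI.1 hr'I.1
        _ = (A.lipT + B/(2*a^2)) * |r - r'| := by rw [abs_sub_comm]
        _ ≤ _ := hKmul _
  constructor
  · intro a b ha hab hbl
    exact ⟨_, hLip a b ha hab hbl⟩
  · -- a.e. differentiability with the explicit formula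
    have hmain : ∀ r ∈ Set.Ioo (0:ℝ) l, s + r ∈ A.diffSet → DifferentiableAt ℝ J r →
        HasDerivAt J (-(ρ (xmin r) y)^2 / (2*r^2) + A.deriv (s+r) (xmin r)) r := by
      intro r hr hds hdiff
      have hr0 : 0 < r := hr.1
      set g : ℝ → ℝ := fun r' => (E (s+r') (xmin r)).toReal + ρ (xmin r) y ^ 2 / (2*r')
        with hg_def
      have hgE : HasDerivAt (fun r' : ℝ => (E (s+r') (xmin r)).toReal)
          (A.deriv (s+r) (xmin r)) r := by
        have h1 := A.hasDeriv (s+r) hds (xmin r) (hdom r hr)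
        have h2 : HasDerivAt (fun t => (E t (xmin r)).toReal) (A.deriv (s+r) (xmin r)) (s+r) :=
          h1.hasDerivAt (Icc_mem_nhds (hIoo r hr).1 (hIoo r hr).2)
        have h3 : HasDerivAt (fun r' : ℝ => s + r') 1 r := by
          simpa using (hasDerivAt_id r).const_add s
        have h4 := HasDerivAt.comp r h2 h3
        rw [mul_one] at h4
        exact h4
      have hden : HasDerivAt (fun r' : ℝ => ρ (xmin r) y ^ 2 / (2*r'))
          (-(ρ (xmin r) y ^ 2) / (2*r^2)) r := by
        have h1 : HasDerivAt (fun r' : ℝ => 2*r') 2 r := by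
          simpa using (hasDerivAt_id r).const_mul 2
        have h2 : (2:ℝ)*r ≠ 0 := by positivity
        have h3 := h1.inv h2
        have h4 := h3.const_mul (ρ (xmin r) y ^ 2)
        have heq : ρ (xmin r) y ^ 2 * (-2/(2*r)^2) = -(ρ (xmin r) y ^ 2) / (2*r^2) := by
          field_simp
        rw [heq] at h4
        simpa [div_eq_mul_inv] using h4
      have hgd : HasDerivAt g
          (A.deriv (s+r) (xmin r) + -(ρ (xmin r) y ^ 2) / (2*r^2)) r := hgE.add hden
      have hle : ∀ r' ∈ Set.Ioo (0:ℝ) l, J r' ≤ g r' := fun r' hr' =>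
        hmin r' hr' (xmin r) (hdom r hr)
      have heqr : J r = g r := rfl
      have hloc : IsLocalMin (fun r' => g r' - J r') r := by
        filter_upwards [isOpen_Ioo.eventually_mem hr] with r' hr'
        have := hle r' hr'
        show g r - J r ≤ g r' - J r'
        linarith [heqr.ge, heqr.le]
      have hder0 : deriv (fun r' => g r' - J r') r = 0 := hloc.deriv_eq_zero
      have hdsub : deriv (fun r' => g r' - J r') r
          = (A.deriv (s+r) (xmin r) + -(ρ (xmin r) y ^ 2) / (2*r^2)) - deriv J r := by
        rw [deriv_fun_sub hgd.differentiableAt hdiff, hgd.deriv]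
      have hderJ : deriv J r = -(ρ (xmin r) y)^2 / (2*r^2) + A.deriv (s+r) (xmin r) := by
        have : -(ρ (xmin r) y)^2 / (2*r^2) = -(ρ (xmin r) y ^ 2) / (2*r^2) := by ring
        rw [this]
        linarith [hder0, hdsub.symm.trans hder0]
      exact hderJ ▸ hdiff.hasDerivAt
    rw [ae_restrict_iff' measurableSet_Ioo]
    have hae1 : ∀ᵐ r : ℝ, r ∉ (fun r : ℝ => s + r) ⁻¹' (Set.Icc 0 T \ A.diffSet) := by
      rw [← measure_eq_zero_iff_ae_notMem, measure_preimage_add]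
      exact A.diffSet_ae
    have hae2 : ∀ᵐ r : ℝ, ∀ n : ℕ,
        r ∈ Set.Icc (l/((n:ℝ)+3)) (l - l/((n:ℝ)+3)) →
        DifferentiableWithinAt ℝ J (Set.Icc (l/((n:ℝ)+3)) (l - l/((n:ℝ)+3))) r := by
      rw [ae_all_iff]
      intro n
      have hn3 : (0:ℝ) < (n:ℝ)+3 := by positivity
      have ha : 0 < l/((n:ℝ)+3) := div_pos hl hn3
      have hhalf : l/((n:ℝ)+3) ≤ l/2 := by
        apply div_le_div_of_nonneg_left hl.le (by norm_num)
        have : (2:ℝ) ≤ (n:ℝ)+3 := by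
          have : (0:ℝ) ≤ (n:ℝ) := Nat.cast_nonneg n
          linarith
        exact this
      have hab : l/((n:ℝ)+3) ≤ l - l/((n:ℝ)+3) := by linarith
      have hbl : l - l/((n:ℝ)+3) < l := by linarith
      exact (hLip _ _ ha hab hbl).ae_differentiableWithinAt_of_mem
    filter_upwards [hae1, hae2] with r h1 h2 hr
    have hdiffset : s + r ∈ A.diffSet := by
      by_contra h
      exact h1 ⟨hIcc r hr, h⟩
    have hdiffat : DifferentiableAt ℝ J r := by
      have hm : 0 < min r (l - r) := lt_min hr.1 (by linarith [hr.2])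
      obtain ⟨n, hn⟩ := exists_nat_gt (l / min r (l - r))
      have hn3 : (0:ℝ) < (n:ℝ)+3 := by positivity
      have hln : l / ((n:ℝ)+3) < min r (l - r) := by
        rw [div_lt_iff₀ hn3]
        have h' : l / min r (l - r) < (n:ℝ)+3 := by linarith
        rw [div_lt_iff₀ hm] at h'
        linarith [h']
      have hlr : l / ((n:ℝ)+3) < r := lt_of_lt_of_le hln (min_le_left _ _)
      have hrl : r < l - l / ((n:ℝ)+3) := by
        have := lt_of_lt_of_le hln (min_le_right _ _)
        linarith
      have h3 := h2 n ⟨hlr.le, hrl.le⟩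
      exact h3.differentiableAt (Icc_mem_nhds hlr hrl)
    exact hmain r hr hdiffset hdiffat
end

section
/- Let E be admissible, h > 0, t_n := nh, and let (x_n) be defined recursively by x_0 = x̄ ∈ Dom(E) and x_n a minimizer of x ↦ E_{t_n}(x) + d_{t_n}(x, x_{n−1})²/(2h). Then for every m with mh ≤ T: E_{t_m}(x_m) ≤ E_0(x̄) + T L*, and (1/(2h)) Σ_{n=1}^m d_{t_n}(x_n, x_{n−1})² ≤ E_0(x̄) − E_{t_m}(x_m) + T L* ≤ E_0(x̄) − inf_{t,x} E_t(x) + T L*. -/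
open MeasureTheory Filter Topology Set
open scoped ENNReal NNReal

/-- A priori estimates for the minimizing movement scheme: energy bound
along the discrete solutions and the summed squared-distance estimate. -/
theorem discrete_scheme_apriori_bounds {X : Type*} [TopologicalSpace X] {T L : ℝ}
    (hT : 0 < T) (hL : 0 ≤ L) (D : DynMetric X T L) (E : ℝ → X → EReal)
    (A : Admissible T E) (h : ℝ) (hh : 0 < h)
    (xbar : X) (hxbar : xbar ∈ A.dom) (x : ℕ → X) (hx0 : x 0 = xbar)
    (hmin : ∀ n : ℕ, 1 ≤ n → (n : ℝ) * h ≤ T → ∀ z : X,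
      E ((n : ℝ)*h) (x n) + (((D.d ((n : ℝ)*h) (x n) (x (n-1)))^2 / (2*h) : ℝ) : EReal)
        ≤ E ((n : ℝ)*h) z + (((D.d ((n : ℝ)*h) z (x (n-1)))^2 / (2*h) : ℝ) : EReal)) :
    ∀ m : ℕ, (m : ℝ) * h ≤ T →
      (E ((m : ℝ)*h) (x m)).toReal ≤ (E 0 xbar).toReal + T * A.lipT ∧
      (1/(2*h)) * (∑ n ∈ Finset.Icc 1 m, (D.d ((n : ℝ)*h) (x n) (x (n-1)))^2)
        ≤ (E 0 xbar).toReal - (E ((m : ℝ)*h) (x m)).toReal + T * A.lipT ∧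
      (E 0 xbar).toReal - (E ((m : ℝ)*h) (x m)).toReal + T * A.lipT
        ≤ (E 0 xbar).toReal
          - sInf {v : ℝ | ∃ t ∈ Set.Icc (0:ℝ) T, ∃ z ∈ A.dom, v = (E t z).toReal}
          + T * A.lipT := by
  intro m hmT
  have hE0 : (0:ℝ) ∈ Set.Icc (0:ℝ) T := ⟨le_refl 0, le_of_lt hT⟩
  have hcoe : ∀ t ∈ Set.Icc (0:ℝ) T, ∀ z ∈ A.dom, E t z = (((E t z).toReal : ℝ) : EReal) := by
    intro t ht z hz
    exact (EReal.coe_toReal (ne_of_lt ((A.finite_iff t ht z).mpr hz)) (A.ne_bot t ht z)).symm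
  -- main induction
  have key : ∀ k : ℕ, (k : ℝ) * h ≤ T → x k ∈ A.dom ∧
      (E ((k : ℝ)*h) (x k)).toReal
        + (1/(2*h)) * (∑ n ∈ Finset.Icc 1 k, (D.d ((n : ℝ)*h) (x n) (x (n-1)))^2)
        ≤ (E 0 xbar).toReal + ((k : ℝ)*h) * A.lipT := by
    intro k
    induction k with
    | zero =>
      intro _
      refine ⟨hx0 ▸ hxbar, ?_⟩
      simp [hx0]
    | succ k ih =>
      intro hkT
      have hk1 : ((k:ℝ)+1) * h ≤ T := by push_cast at hkT; linarith
      have hkh : (k : ℝ) * h ≤ T := by nlinarith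
      obtain ⟨hdomk, hbound⟩ := ih hkh
      have htk : (k : ℝ) * h ∈ Set.Icc (0:ℝ) T := ⟨by positivity, hkh⟩
      have ht : ((k+1:ℕ) : ℝ) * h ∈ Set.Icc (0:ℝ) T := ⟨by positivity, hkT⟩
      have hmin' := hmin (k+1) (Nat.le_add_left 1 k) hkT (x k)
      have hprev : (k+1) - 1 = k := rfl
      rw [hprev] at hmin'
      rw [D.d_self _ ht (x k)] at hmin'
      have hzero : ((0:ℝ)^2 / (2*h) : ℝ) = 0 := by
        rw [zero_pow (by norm_num), zero_div]
      rw [hzero] at hmin'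
      set c : ℝ := (D.d (((k+1:ℕ)) * h) (x (k+1)) (x k))^2 / (2*h) with hc
      have hc0 : 0 ≤ c := by positivity
      have hle : E (((k+1:ℕ)) * h) (x (k+1)) + (c : EReal) ≤ E (((k+1:ℕ)) * h) (x k) := by
        simpa using hmin'
      have hself : E (((k+1:ℕ)) * h) (x (k+1)) ≤ E (((k+1:ℕ)) * h) (x (k+1)) + (c : EReal) := by
        calc E (((k+1:ℕ)) * h) (x (k+1)) = E (((k+1:ℕ)) * h) (x (k+1)) + (0 : EReal) := by
              rw [add_zero]
          _ ≤ E (((k+1:ℕ)) * h) (x (k+1)) + (c : EReal) := by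
              gcongr
              exact_mod_cast hc0
      have hfin : E (((k+1:ℕ)) * h) (x (k+1)) < ⊤ := by
        refine lt_of_le_of_lt (hself.trans hle) ?_
        exact (A.finite_iff _ ht (x k)).mpr hdomk
      have hdomk1 : x (k+1) ∈ A.dom := (A.finite_iff _ ht _).mp hfin
      -- convert hle to reals
      have hreal : (E (((k+1:ℕ)) * h) (x (k+1))).toReal + c ≤ (E (((k+1:ℕ)) * h) (x k)).toReal := by
        have h1 := hcoe _ ht _ hdomk1
        have h2 := hcoe _ ht _ hdomk
        rw [h1, h2, ← EReal.coe_add] at hle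
        exact_mod_cast hle
      -- Lipschitz in time
      have hlip := A.lip ((k:ℝ)*h) htk (((k+1:ℕ)) * h) ht (x k) hdomk
      have habs : |(((k+1:ℕ)) : ℝ) * h - (k:ℝ)*h| = h := by
        push_cast
        rw [abs_of_nonneg (by linarith)]
        ring
      rw [habs] at hlip
      have hlip' : (E (((k+1:ℕ)) * h) (x k)).toReal ≤ (E ((k:ℝ)*h) (x k)).toReal + A.lipT * h :=
        by have := abs_le.mp hlip; linarith [this.2]
      -- sum split
      have hsum : (∑ n ∈ Finset.Icc 1 (k+1), (D.d ((n : ℝ)*h) (x n) (x (n-1)))^2)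
          = (∑ n ∈ Finset.Icc 1 k, (D.d ((n : ℝ)*h) (x n) (x (n-1)))^2)
            + (D.d (((k+1:ℕ)) * h) (x (k+1)) (x k))^2 := by
        rw [Finset.sum_Icc_succ_top (Nat.le_add_left 1 k)]
        rfl
      refine ⟨hdomk1, ?_⟩
      rw [hsum]
      have hch : (D.d (((k+1:ℕ)) * h) (x (k+1)) (x k))^2 = c * (2*h) := by
        rw [hc, div_mul_cancel₀]
        positivity
      have hexp : (1/(2*h)) * ((∑ n ∈ Finset.Icc 1 k, (D.d ((n : ℝ)*h) (x n) (x (n-1)))^2)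
            + (D.d (((k+1:ℕ)) * h) (x (k+1)) (x k))^2)
          = (1/(2*h)) * (∑ n ∈ Finset.Icc 1 k, (D.d ((n : ℝ)*h) (x n) (x (n-1)))^2) + c := by
        rw [hch]; field_simp
      rw [hexp]
      have hcast : (((k+1:ℕ)) : ℝ) * h * A.lipT = ((k:ℝ)*h) * A.lipT + A.lipT * h := by
        push_cast; ring
      rw [hcast]
      linarith
  obtain ⟨hdomm, hboundm⟩ := key m hmT
  have htm : (m : ℝ) * h ∈ Set.Icc (0:ℝ) T := ⟨by positivity, hmT⟩
  have hSnn : 0 ≤ (1/(2*h)) * (∑ n ∈ Finset.Icc 1 m, (D.d ((n : ℝ)*h) (x n) (x (n-1)))^2) := by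
    apply mul_nonneg (by positivity)
    exact Finset.sum_nonneg fun i _ => sq_nonneg _
  have hmhT : ((m:ℝ)*h) * A.lipT ≤ T * A.lipT :=
    mul_le_mul_of_nonneg_right hmT A.lipT_nonneg
  refine ⟨by linarith, by linarith, ?_⟩
  -- third inequality: sInf ≤ value
  set V : Set ℝ := {v : ℝ | ∃ t ∈ Set.Icc (0:ℝ) T, ∃ z ∈ A.dom, v = (E t z).toReal} with hV
  have hmem : (E ((m : ℝ)*h) (x m)).toReal ∈ V := ⟨(m:ℝ)*h, htm, x m, hdomm, rfl⟩
  have hbdd : BddBelow V := by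
    refine ⟨A.lowBound, ?_⟩
    rintro v ⟨t, ht, z, hz, rfl⟩
    have := A.le_energy t ht z
    rw [hcoe t ht z hz] at this
    exact_mod_cast this
  have := csInf_le hbdd hmem
  linarith
end

section
/- The relative entropy S : [0,T] × P₂(X) → (−∞,+∞] satisfies: (1) Dom(S_t) := {μ : S_t(μ) < ∞} is independent of t; (2) inf_{t∈[0,T], μ∈P₂(X)} S_t(μ) > −∞ (indeed S_t(μ) ≥ −sup_x|f_t(x)| for all μ absolutely continuous w.r.t. m); (3) for every μ ∈ Dom(S), the map t ↦ S_t(μ) is Lipschitz with constant L* and S_t(μ) = Ent(μ|m) + ∫_X f_t dμ; (4) there is a set N ⊂ [0,T] of full Lebesgue measure, independent of μ, such that for every μ ∈ Dom(S) and every t ∈ N the derivative (d/dt)S_t(μ) exists and equals ∫_X (∂_t f_t)(x) dμ(x). -/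
open MeasureTheory Filter Topology Set
open scoped ENNReal NNReal

/-- The squared `L²`-Kantorovich (Wasserstein) distance for the cost `d²`, as an infimum
over couplings, with values in `[0,∞]`. -/
noncomputable def WsqE {X : Type*} [MeasurableSpace X] (d : X → X → ℝ)
    (μ ν : Measure X) : ℝ≥0∞ :=
  ⨅ (π : Measure (X × X)) (_ : IsProbabilityMeasure π ∧
      π.map Prod.fst = μ ∧ π.map Prod.snd = ν),
    ∫⁻ p, ENNReal.ofReal ((d p.1 p.2)^2) ∂π

/-- The `L²`-Kantorovich (Wasserstein) distance for the cost `d²`. -/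
noncomputable def Wd {X : Type*} [MeasurableSpace X] (d : X → X → ℝ)
    (μ ν : Measure X) : ℝ :=
  Real.sqrt (WsqE d μ ν).toReal

/-- Membership in `P₂(X)`: Borel probability measures with finite second moment
(with respect to some, hence by the log-Lipschitz bound every, metric `d t`). -/
def MemP2 {X : Type*} [TopologicalSpace X] [MeasurableSpace X] {T L : ℝ}
    (D : DynMetric X T L) (μ : Measure X) : Prop :=
  IsProbabilityMeasure μ ∧
  ∃ t ∈ Set.Icc (0:ℝ) T, ∃ x₀ : X, (∫⁻ x, ENNReal.ofReal ((D.d t x x₀)^2) ∂μ) < ⊤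

/-- Membership in `AC²([0,T]; P₂(X))` w.r.t. the time-dependent Kantorovich metrics. -/
def WAC2 {X : Type*} [TopologicalSpace X] [MeasurableSpace X] {T L : ℝ}
    (D : DynMetric X T L) (μ : ℝ → Measure X) : Prop :=
  (∀ t ∈ Set.Icc (0:ℝ) T, MemP2 D (μ t)) ∧
  ∃ t' ∈ Set.Icc (0:ℝ) T, ∃ g : ℝ → ℝ,
    MemLp g 2 (volume.restrict (Set.Ioo (0:ℝ) T)) ∧
    ∀ s ∈ Set.Icc (0:ℝ) T, ∀ t ∈ Set.Icc (0:ℝ) T, s ≤ t →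
      Wd (D.d t') (μ s) (μ t) ≤ ∫ r in s..t, g r

/-- The metric speed `|μ̇|_t` of a curve of measures w.r.t. the Kantorovich metric `W_t`,
as a limit superior of difference quotients (which is the actual limit at a.e. `t` for
absolutely continuous curves). -/
noncomputable def wspeed {X : Type*} [TopologicalSpace X] [MeasurableSpace X] {T L : ℝ}
    (D : DynMetric X T L) (μ : ℝ → Measure X) (t : ℝ) : ℝ :=
  Filter.limsup (fun s => Wd (D.d t) (μ s) (μ t) / |s - t|) (𝓝[≠] t)

open Classical in
/-- Relative (Boltzmann) entropy `Ent(μ|ν) = ∫ ρ log ρ dν` (`ρ = dμ/dν`), equal to `+∞`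
if `μ` is not absolutely continuous w.r.t. `ν` or if the integral does not exist. -/
noncomputable def relEnt {X : Type*} [MeasurableSpace X] (μ ν : Measure X) : EReal :=
  if μ ≪ ν ∧ Integrable (fun x => Real.log ((μ.rnDeriv ν x).toReal)) μ
  then ((∫ x, Real.log ((μ.rnDeriv ν x).toReal) ∂μ : ℝ) : EReal) else ⊤

/-- The time-dependent reference measures `m_t = e^{-f_t} m`. -/
noncomputable def refMeas {X : Type*} [MeasurableSpace X] (m : Measure X) (f : ℝ → X → ℝ)
    (t : ℝ) : Measure X :=
  m.withDensity (fun x => ENNReal.ofReal (Real.exp (-(f t x))))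

/-- The time-dependent relative entropy `S_t(μ) = Ent(μ | m_t)`. -/
noncomputable def entS {X : Type*} [MeasurableSpace X] (m : Measure X) (f : ℝ → X → ℝ)
    (t : ℝ) (μ : Measure X) : EReal :=
  relEnt μ (refMeas m f t)

section MyAux
variable {X : Type*} [MeasurableSpace X]

lemma myRelEnt_nonneg (m μ : Measure X) [IsProbabilityMeasure m] [IsProbabilityMeasure μ]
    (hac : μ ≪ m) (hint : Integrable (llr μ m) μ) : 0 ≤ ∫ x, llr μ m x ∂μ := by
  have h1 : ∫ x, llr μ m x ∂μ = ∫ x, (μ.rnDeriv m x).toReal • llr μ m x ∂m :=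
    (integral_rnDeriv_smul hac).symm
  have hint' : Integrable (fun x => (μ.rnDeriv m x).toReal • llr μ m x) m :=
    (integrable_rnDeriv_smul_iff hac).2 hint
  have hρint : Integrable (fun x => (μ.rnDeriv m x).toReal) m :=
    Measure.integrable_toReal_rnDeriv
  have hpt : ∀ x, (μ.rnDeriv m x).toReal - 1 ≤ (μ.rnDeriv m x).toReal • llr μ m x := by
    intro x
    rcases le_or_gt (μ.rnDeriv m x).toReal 0 with h | h
    · have h0 : (μ.rnDeriv m x).toReal = 0 := le_antisymm h ENNReal.toReal_nonneg
      simp [llr, h0]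
    · have hlog := Real.log_le_sub_one_of_pos (inv_pos.2 h)
      rw [Real.log_inv] at hlog
      simp only [smul_eq_mul, llr]
      have h2 : (μ.rnDeriv m x).toReal * -Real.log (μ.rnDeriv m x).toReal
          ≤ (μ.rnDeriv m x).toReal * ((μ.rnDeriv m x).toReal⁻¹ - 1) :=
        mul_le_mul_of_nonneg_left hlog h.le
      rw [mul_sub, mul_inv_cancel₀ h.ne'] at h2
      nlinarith
  have h2 : ∫ x, ((μ.rnDeriv m x).toReal - 1) ∂m ≤ ∫ x, (μ.rnDeriv m x).toReal • llr μ m x ∂m :=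
    integral_mono (hρint.sub (integrable_const 1)) hint' hpt
  have h3 : ∫ x, ((μ.rnDeriv m x).toReal - 1) ∂m = 0 := by
    rw [integral_sub hρint (integrable_const 1), Measure.integral_toReal_rnDeriv hac]
    simp
  rw [h1]; rw [h3] at h2; exact h2

lemma myLlr_withDensity (m μ : Measure X) [IsProbabilityMeasure m] [IsProbabilityMeasure μ]
    (φ : X → ℝ) (hφ : Measurable φ) (hac : μ ≪ m) :
    llr μ (m.withDensity fun x => ENNReal.ofReal (Real.exp (-(φ x))))
      =ᵐ[μ] fun x => llr μ m x + φ x := by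
  have hw : Measurable fun x => ENNReal.ofReal (Real.exp (-(φ x))) :=
    (hφ.neg.exp).ennreal_ofReal
  have hw0 : ∀ᵐ x ∂m, ENNReal.ofReal (Real.exp (-(φ x))) ≠ 0 :=
    ae_of_all _ fun x => by simp [ENNReal.ofReal_eq_zero, not_le, Real.exp_pos]
  have hwt : ∀ᵐ x ∂m, ENNReal.ofReal (Real.exp (-(φ x))) ≠ ∞ :=
    ae_of_all _ fun x => ENNReal.ofReal_ne_top
  have h := Measure.rnDeriv_withDensity_right μ m hw.aemeasurable hw0 hwt
  filter_upwards [hac.ae_le h, Measure.rnDeriv_pos hac, hac.ae_le (Measure.rnDeriv_lt_top μ m)]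
    with x hx hpos hlt
  rw [llr, hx]
  have hρ : (0:ℝ) < (μ.rnDeriv m x).toReal := ENNReal.toReal_pos hpos.ne' hlt.ne
  rw [ENNReal.toReal_mul, ENNReal.toReal_inv, ENNReal.toReal_ofReal (Real.exp_nonneg _),
    ← Real.exp_neg, neg_neg, Real.log_mul (Real.exp_ne_zero _) hρ.ne', Real.log_exp]
  rw [llr]; ring

end MyAux

section MyAux2
open Real
variable {X : Type*} [MeasurableSpace X]

lemma myEntS_eq (m : Measure X) [IsProbabilityMeasure m] (f : ℝ → X → ℝ) (t : ℝ)
    (hft : Measurable (f t)) (Cf : ℝ) (hCfb : ∀ x : X, |f t x| ≤ Cf)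
    (μ : Measure X) [IsProbabilityMeasure μ] :
    entS m f t μ = relEnt μ m + ((∫ x, f t x ∂μ : ℝ) : EReal) := by
  have hw : Measurable fun x : X => ENNReal.ofReal (Real.exp (-(f t x))) :=
    ((hft.neg).exp).ennreal_ofReal
  have hw0 : ∀ᵐ x ∂m, ENNReal.ofReal (Real.exp (-(f t x))) ≠ 0 :=
    ae_of_all _ fun x => by simp [ENNReal.ofReal_eq_zero, not_le, Real.exp_pos]
  by_cases hac : μ ≪ m
  · have key : llr μ (refMeas m f t) =ᵐ[μ] fun x => llr μ m x + f t x :=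
      myLlr_withDensity m μ (f t) hft hac
    have hfti : Integrable (f t) μ :=
      (integrable_const Cf).mono' hft.aestronglyMeasurable
        (ae_of_all _ fun x => by rw [Real.norm_eq_abs]; exact hCfb x)
    have hiff : Integrable (llr μ (refMeas m f t)) μ ↔ Integrable (llr μ m) μ := by
      rw [integrable_congr key]
      exact ⟨fun h => (h.sub hfti).congr (ae_of_all _ fun x => by simp), fun h => h.add hfti⟩
    have hac' : μ ≪ refMeas m f t :=
      hac.trans (withDensity_absolutelyContinuous' hw.aemeasurable hw0)
    by_cases hint : Integrable (llr μ m) μ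
    · rw [entS, relEnt, if_pos ⟨hac', hiff.2 hint⟩, relEnt, if_pos ⟨hac, hint⟩,
        ← EReal.coe_add]
      norm_cast
      have : ∫ x, llr μ (refMeas m f t) x ∂μ = ∫ x, (llr μ m x + f t x) ∂μ :=
        integral_congr_ae key
      rw [show (fun x => Real.log ((μ.rnDeriv (refMeas m f t) x).toReal)) = llr μ (refMeas m f t) from rfl,
        show (fun x => Real.log ((μ.rnDeriv m x).toReal)) = llr μ m from rfl,
        this, integral_add hint hfti]
    · rw [entS, relEnt, if_neg, relEnt, if_neg, EReal.top_add_coe]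
      · exact fun hc => hint hc.2
      · exact fun hc => hint (hiff.1 hc.2)
  · have h1 : ¬ μ ≪ refMeas m f t := fun h =>
      hac (h.trans (withDensity_absolutelyContinuous _ _))
    rw [entS, relEnt, if_neg (fun hc => h1 hc.1), relEnt, if_neg (fun hc => hac hc.1),
      EReal.top_add_coe]

lemma myEntS_lt_top_iff (m : Measure X) [IsProbabilityMeasure m] (f : ℝ → X → ℝ) (t : ℝ)
    (hft : Measurable (f t)) (Cf : ℝ) (hCfb : ∀ x : X, |f t x| ≤ Cf)
    (μ : Measure X) [IsProbabilityMeasure μ] :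
    (entS m f t μ < ⊤ ↔ (μ ≪ m ∧ Integrable (llr μ m) μ)) := by
  rw [myEntS_eq m f t hft Cf hCfb μ]
  rw [relEnt, show (fun x => Real.log ((μ.rnDeriv m x).toReal)) = llr μ m from rfl]
  by_cases h : μ ≪ m ∧ Integrable (llr μ m) μ
  · rw [if_pos h, ← EReal.coe_add]
    exact iff_of_true (EReal.coe_lt_top _) h
  · rw [if_neg h, EReal.top_add_coe]
    exact iff_of_false (lt_irrefl _) h

end MyAux2

section MyPart5
open Real

lemma myPart5 {X : Type*} [MeasurableSpace X]
    (m : Measure X) [IsProbabilityMeasure m] {T Lstar Cf : ℝ} (hT : 0 < T) (hLstar : 0 ≤ Lstar)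
    (f : ℝ → X → ℝ) (hfm : ∀ t, Measurable (f t))
    (hCf : ∀ t ∈ Set.Icc (0:ℝ) T, ∀ x : X, |f t x| ≤ Cf)
    (hlip : ∀ s ∈ Set.Icc (0:ℝ) T, ∀ t ∈ Set.Icc (0:ℝ) T, ∀ x : X,
      |f t x - f s x| ≤ Lstar * |t - s|) :
    ∃ N : Set ℝ, volume (Set.Icc (0:ℝ) T \ N) = 0 ∧ ∃ f' : ℝ → X → ℝ,
      ∀ t ∈ N ∩ Set.Icc (0:ℝ) T,
        (∀ᵐ x ∂m, HasDerivWithinAt (fun r => f r x) (f' t x) (Set.Icc (0:ℝ) T) t) ∧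
        ∀ μ : Measure X, IsProbabilityMeasure μ → μ ≪ m →
          HasDerivWithinAt (fun r => ∫ x, f r x ∂μ) (∫ x, f' t x ∂μ)
            (Set.Icc (0:ℝ) T) t := by
  classical
  set proj : ℝ → ℝ := fun t => max 0 (min T t) with hproj_def
  have hproj_mem : ∀ t, proj t ∈ Set.Icc (0:ℝ) T :=
    fun t => ⟨le_max_left _ _, max_le hT.le (min_le_left _ _)⟩
  have hproj_eq : ∀ t ∈ Set.Icc (0:ℝ) T, proj t = t := by
    intro t ht
    simp only [hproj_def]
    rw [min_eq_right ht.2, max_eq_right ht.1]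
  have hproj_lip : ∀ s t : ℝ, |proj t - proj s| ≤ |t - s| := by
    intro s t
    have h1 : |proj t - proj s| ≤ |min T t - min T s| := by
      simp only [hproj_def, max_comm (0:ℝ)]
      exact abs_max_sub_max_le_abs _ _ _
    refine h1.trans ?_
    have h2 := abs_min_sub_min_le_max T t T s
    simpa using h2
  set g : ℝ → X → ℝ := fun t x => f (proj t) x with hg_def
  have hg_lip : ∀ (x : X) (s t : ℝ), |g t x - g s x| ≤ Lstar * |t - s| := by
    intro x s t
    refine (hlip (proj s) (hproj_mem s) (proj t) (hproj_mem t) x).trans ?_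
    exact mul_le_mul_of_nonneg_left (hproj_lip s t) hLstar
  have hg_lipW : ∀ x : X, LipschitzWith ⟨Lstar, hLstar⟩ (fun t => g t x) := by
    intro x
    refine LipschitzWith.of_dist_le_mul fun s t => ?_
    rw [Real.dist_eq, Real.dist_eq]
    exact hg_lip x t s
  have hGmeas : Measurable (Function.uncurry g) :=
    measurable_uncurry_of_continuous_of_measurable
      (fun x => (hg_lipW x).continuous) (fun t => hfm (proj t))
  set P : ℚ → ℝ × X → ℝ := fun q p => (g (p.1 + q) p.2 - g p.1 p.2) / q with hP_def
  have hPmeas : ∀ q, Measurable (P q) := by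
    intro q
    exact ((hGmeas.comp ((measurable_fst.add_const (q:ℝ)).prodMk measurable_snd)).sub
      (hGmeas.comp (measurable_fst.prodMk measurable_snd))).div_const _
  have hPabs : ∀ (q : ℚ) (p : ℝ × X), q ≠ 0 → |P q p| ≤ Lstar := by
    intro q p hq
    have hq' : (0:ℝ) < |(q:ℝ)| := abs_pos.2 (by exact_mod_cast hq)
    simp only [hP_def, abs_div]
    rw [div_le_iff₀ hq']
    have h2 := hg_lip p.2 p.1 (p.1 + q)
    simpa using h2
  set A : Set (ℝ × X) := {p | ∀ k : ℕ, ∃ n : ℕ, ∀ q q' : ℚ, q ≠ 0 → q' ≠ 0 →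
      |(q:ℝ)| ≤ 1/(n+1) → |(q':ℝ)| ≤ 1/(n+1) → |P q p - P q' p| ≤ 1/(k+1)} with hA_def
  have hAmeas : MeasurableSet A := by
    have hA2 : A = ⋂ k : ℕ, ⋃ n : ℕ, ⋂ q : ℚ, ⋂ q' : ℚ,
        {p : ℝ × X | q ≠ 0 → q' ≠ 0 → |(q:ℝ)| ≤ 1/(n+1) → |(q':ℝ)| ≤ 1/(n+1) →
          |P q p - P q' p| ≤ 1/(k+1)} := by
      ext p
      simp only [hA_def, Set.mem_setOf_eq, Set.mem_iInter, Set.mem_iUnion]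
    rw [hA2]
    refine MeasurableSet.iInter fun k => MeasurableSet.iUnion fun n =>
      MeasurableSet.iInter fun q => MeasurableSet.iInter fun q' => ?_
    by_cases hcond : q ≠ 0 ∧ q' ≠ 0 ∧ |(q:ℝ)| ≤ 1/(n+1) ∧ |(q':ℝ)| ≤ 1/(n+1)
    · have he : {p : ℝ × X | q ≠ 0 → q' ≠ 0 → |(q:ℝ)| ≤ 1/(n+1) → |(q':ℝ)| ≤ 1/(n+1) →
          |P q p - P q' p| ≤ 1/(k+1)} = {p : ℝ × X | |P q p - P q' p| ≤ 1/(k+1)} := by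
        ext p
        constructor
        · intro h
          exact h hcond.1 hcond.2.1 hcond.2.2.1 hcond.2.2.2
        · intro h _ _ _ _
          exact h
      rw [he]
      exact measurableSet_le (((hPmeas q).sub (hPmeas q')).abs) measurable_const
    · have he : {p : ℝ × X | q ≠ 0 → q' ≠ 0 → |(q:ℝ)| ≤ 1/(n+1) → |(q':ℝ)| ≤ 1/(n+1) →
          |P q p - P q' p| ≤ 1/(k+1)} = Set.univ := by
        ext p
        simp only [Set.mem_setOf_eq, Set.mem_univ, iff_true]
        intro a b c d
        exact ((hcond ⟨a, b, c, d⟩)).elim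
      rw [he]
      exact MeasurableSet.univ
  have hslopeP : ∀ (x : X) (t : ℝ) (q : ℚ), q ≠ 0 →
      slope (fun s => g s x) t (t + q) = P q (t, x) := by
    intro x t q hq
    rw [slope_def_field]
    simp only [hP_def]
    rw [add_sub_cancel_left]
  have hA1 : ∀ (x : X) (t c : ℝ), HasDerivAt (fun s => g s x) c t → (t, x) ∈ A := by
    intro x t c hd
    rw [hasDerivAt_iff_tendsto_slope] at hd
    intro k
    have hk2 : (0:ℝ) < 1 / (2 * ((k:ℝ) + 1)) := by positivity
    rw [Metric.tendsto_nhdsWithin_nhds] at hd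
    obtain ⟨δ, hδ, hδ'⟩ := hd _ hk2
    obtain ⟨n, hn⟩ := exists_nat_one_div_lt hδ
    refine ⟨n, fun q q' hq hq' hqn hq'n => ?_⟩
    have hmem : ∀ r : ℚ, r ≠ 0 → |(r:ℝ)| ≤ 1/((n:ℝ)+1) →
        |slope (fun s => g s x) t (t + r) - c| < 1 / (2 * ((k:ℝ) + 1)) := by
      intro r hr hrn
      have hr' : (r:ℝ) ≠ 0 := by exact_mod_cast hr
      have h1 : (t + (r:ℝ)) ∈ ({t}ᶜ : Set ℝ) := by
        simp only [Set.mem_compl_iff, Set.mem_singleton_iff]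
        intro hcon
        exact hr' (by linarith)
      have h2 : dist (t + (r:ℝ)) t < δ := by
        rw [Real.dist_eq]
        have : |(r:ℝ)| < δ := lt_of_le_of_lt hrn hn
        simpa using this
      have := hδ' h1 h2
      rwa [Real.dist_eq] at this
    have h1 := hmem q hq hqn
    have h2 := hmem q' hq' hq'n
    rw [hslopeP x t q hq] at h1
    rw [hslopeP x t q' hq'] at h2
    have h3 := abs_sub_le (P q (t,x)) c (P q' (t,x))
    rw [abs_sub_comm c (P q' (t,x))] at h3
    have h4 : 1 / (2 * ((k:ℝ) + 1)) + 1 / (2 * ((k:ℝ) + 1)) = 1/((k:ℝ)+1) := by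
      rw [← add_div, div_eq_div_iff (by positivity) (by positivity)]
      ring
    linarith
  have hb : ∀ n i : ℕ, n ≤ i → |((1/(i+1) : ℚ) : ℝ)| ≤ 1/((n:ℝ)+1) := by
    intro n i hi
    have h1 : ((1/(i+1) : ℚ) : ℝ) = 1/((i:ℝ)+1) := by push_cast; ring
    rw [h1, abs_of_pos (by positivity)]
    apply one_div_le_one_div_of_le (by positivity)
    have : (n:ℝ) ≤ (i:ℝ) := by exact_mod_cast hi
    linarith
  have haq0 : ∀ n : ℕ, (1/(n+1) : ℚ) ≠ 0 := fun n => by positivity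
  set a : ℕ → ℝ × X → ℝ := fun n p => P (1/(n+1) : ℚ) p with ha_def
  set f' : ℝ → X → ℝ := fun t x =>
    (Filter.limsup (fun n => ((a n (t, x) : ℝ) : EReal)) Filter.atTop).toReal with hf'_def
  have hf'meas : ∀ t, Measurable (f' t) := by
    intro t
    have h1 : Measurable (fun p : ℝ × X =>
        Filter.limsup (fun n => ((a n p : ℝ) : EReal)) Filter.atTop) :=
      Measurable.limsup fun n => measurable_coe_real_ereal.comp (hPmeas _)
    exact measurable_ereal_toReal.comp (h1.comp measurable_prodMk_left)
  have hA2 : ∀ (x : X) (t : ℝ), (t, x) ∈ A →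
      HasDerivAt (fun s => g s x) (f' t x) t := by
    intro x t hp
    have hcauchy : CauchySeq (fun n => a n (t, x)) := by
      rw [Metric.cauchySeq_iff]
      intro ε hε
      obtain ⟨k, hk⟩ := exists_nat_one_div_lt hε
      obtain ⟨n, hn⟩ := hp k
      refine ⟨n, fun j hj j' hj' => ?_⟩
      rw [Real.dist_eq]
      exact lt_of_le_of_lt
        (hn _ _ (haq0 j) (haq0 j') (hb n j hj) (hb n j' hj')) hk
    obtain ⟨c, hc⟩ := cauchySeq_tendsto_of_complete hcauchy
    have hf'eq : f' t x = c := by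
      have h1 : Filter.Tendsto (fun n => ((a n (t, x) : ℝ) : EReal)) Filter.atTop
          (𝓝 ((c : ℝ) : EReal)) := (continuous_coe_real_ereal.tendsto c).comp hc
      simp only [hf'_def]
      rw [h1.limsup_eq, EReal.toReal_coe]
    rw [hf'eq, hasDerivAt_iff_tendsto_slope, Metric.tendsto_nhdsWithin_nhds]
    intro ε hε
    obtain ⟨k, hk⟩ := exists_nat_one_div_lt (show (0:ℝ) < ε/2 by linarith)
    obtain ⟨n, hn⟩ := hp k
    obtain ⟨j0, hj0⟩ := (Metric.tendsto_atTop.1 hc) (ε/4) (by linarith)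
    set j : ℕ := max j0 n with hj_def
    have hdistj : |a j (t,x) - c| < ε/4 := by
      have := hj0 j (le_max_left _ _)
      rwa [Real.dist_eq] at this
    refine ⟨1/((n:ℝ)+1), by positivity, ?_⟩
    intro s hs hsd
    have hs' : s ≠ t := hs
    have hst : s - t ≠ 0 := sub_ne_zero.2 hs'
    have hux : ∀ m : ℕ, ∃ q : ℚ, s - t - 1/((m:ℝ)+1) < (q:ℝ) ∧ (q:ℝ) < s - t := by
      intro m
      refine exists_rat_btwn ?_
      have : (0:ℝ) < 1/((m:ℝ)+1) := by positivity
      linarith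
    choose u hu1 hu2 using hux
    have hu : Filter.Tendsto (fun m => ((u m : ℚ) : ℝ)) Filter.atTop (𝓝 (s - t)) := by
      have hlow : Filter.Tendsto (fun m : ℕ => s - t - 1/((m:ℝ)+1)) Filter.atTop
          (𝓝 (s - t)) := by
        have h0 := tendsto_one_div_add_atTop_nhds_zero_nat (𝕜 := ℝ)
        have := h0.const_sub (s - t)
        simpa using this
      exact tendsto_of_tendsto_of_tendsto_of_le_of_le hlow tendsto_const_nhds
        (fun m => (hu1 m).le) (fun m => (hu2 m).le)
    have hu0 : ∀ᶠ m in Filter.atTop, u m ≠ 0 ∧ |(u m : ℝ)| ≤ 1/((n:ℝ)+1) := by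
      have h1 : ∀ᶠ m in Filter.atTop, |(u m : ℝ)| < 1/((n:ℝ)+1) := by
        refine (hu.abs).eventually_lt_const ?_
        rwa [Real.dist_eq] at hsd
      have h2 : ∀ᶠ m in Filter.atTop, 0 < |(u m : ℝ)| := by
        refine (hu.abs).eventually_const_lt ?_
        exact abs_pos.2 hst
      filter_upwards [h1, h2] with m hm1 hm2
      refine ⟨?_, hm1.le⟩
      have : (u m : ℝ) ≠ 0 := fun h => by simp [h] at hm2
      exact_mod_cast this
    have hPu : Filter.Tendsto (fun m => P (u m) (t,x)) Filter.atTop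
        (𝓝 (slope (fun s' => g s' x) t s)) := by
      rw [slope_def_field]
      have hnum : Filter.Tendsto (fun m => g (t + (u m : ℝ)) x - g t x) Filter.atTop
          (𝓝 (g s x - g t x)) := by
        have h1 : Filter.Tendsto (fun m => t + ((u m : ℚ) : ℝ)) Filter.atTop (𝓝 s) := by
          have := hu.const_add t
          simpa using this
        exact (((hg_lipW x).continuous.tendsto s).comp h1).sub tendsto_const_nhds
      simp only [hP_def]
      exact hnum.div hu hst
    have hPb : ∀ᶠ m in Filter.atTop, |P (u m) (t,x) - a j (t,x)| ≤ 1/((k:ℝ)+1) := by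
      filter_upwards [hu0] with m hm
      exact hn (u m) (1/(j+1) : ℚ) hm.1 (haq0 j) hm.2 (hb n j (le_max_right _ _))
    have hlim : |slope (fun s' => g s' x) t s - a j (t,x)| ≤ 1/((k:ℝ)+1) :=
      le_of_tendsto ((hPu.sub tendsto_const_nhds).abs) hPb
    rw [Real.dist_eq]
    have h5 := abs_sub_le (slope (fun s' => g s' x) t s) (a j (t,x)) c
    linarith
  have hA3 : ∀ (x : X) (t : ℝ), (t, x) ∈ A → |f' t x| ≤ Lstar := by
    intro x t hp
    have hd := hA2 x t hp
    rw [hasDerivAt_iff_tendsto_slope] at hd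
    have hc : Filter.Tendsto (fun n => a n (t, x)) Filter.atTop (𝓝 (f' t x)) := by
      have h1 : Filter.Tendsto (fun m : ℕ => t + ((1/(m+1) : ℚ) : ℝ)) Filter.atTop (𝓝[≠] t) := by
        rw [tendsto_nhdsWithin_iff]
        constructor
        · have h0 : Filter.Tendsto (fun m : ℕ => ((1/(m+1) : ℚ) : ℝ)) Filter.atTop (𝓝 0) := by
            have := tendsto_one_div_add_atTop_nhds_zero_nat (𝕜 := ℝ)
            refine this.congr fun m => ?_
            push_cast; ring
          have := h0.const_add t
          simpa using this
        · refine Filter.Eventually.of_forall fun m => ?_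
          have : ((1/(m+1) : ℚ) : ℝ) ≠ 0 := by
            have := haq0 m
            exact_mod_cast this
          simp only [Set.mem_compl_iff, Set.mem_singleton_iff]
          intro hcon
          exact this (by linarith)
      have h2 := hd.comp h1
      refine h2.congr fun m => ?_
      exact hslopeP x t _ (haq0 m)
    exact le_of_tendsto hc.abs (Filter.Eventually.of_forall fun n => hPabs _ _ (haq0 n))
  have hRad : ∀ x : X, ∀ᵐ t : ℝ, (t, x) ∈ A := by
    intro x
    filter_upwards [(hg_lipW x).ae_differentiableAt (μ := volume)] with t ht
    exact hA1 x t _ ht.hasDerivAt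
  have hslice_meas : Measurable fun t : ℝ => m (Prod.mk t ⁻¹' Aᶜ) :=
    measurable_measure_prodMk_left hAmeas.compl
  have hzero : ∫⁻ t in Set.Icc (0:ℝ) T, m (Prod.mk t ⁻¹' Aᶜ) = 0 := by
    have h1 : ((volume.restrict (Set.Icc (0:ℝ) T)).prod m) Aᶜ
        = ∫⁻ t in Set.Icc (0:ℝ) T, m (Prod.mk t ⁻¹' Aᶜ) :=
      Measure.prod_apply hAmeas.compl
    have h2 : ((volume.restrict (Set.Icc (0:ℝ) T)).prod m) Aᶜ = 0 := by
      rw [Measure.prod_apply_symm hAmeas.compl]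
      have h3 : ∀ x : X, (volume.restrict (Set.Icc (0:ℝ) T)) ((fun t => (t, x)) ⁻¹' Aᶜ) = 0 := by
        intro x
        have hnull : volume ((fun t => (t, x)) ⁻¹' Aᶜ) = 0 := by
          have h4 := hRad x
          rw [ae_iff] at h4
          exact h4
        rw [Measure.restrict_apply' measurableSet_Icc]
        exact measure_mono_null Set.inter_subset_left hnull
      rw [lintegral_congr h3]
      simp
    rw [← h1, h2]
  have hae0 : ∀ᵐ t ∂(volume.restrict (Set.Icc (0:ℝ) T)), m (Prod.mk t ⁻¹' Aᶜ) = 0 :=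
    (lintegral_eq_zero_iff hslice_meas).1 hzero
  set N : Set ℝ := {t : ℝ | m (Prod.mk t ⁻¹' Aᶜ) = 0} with hN_def
  have hNm : MeasurableSet N := hslice_meas (measurableSet_singleton 0)
  have hNvol : volume (Set.Icc (0:ℝ) T \ N) = 0 := by
    have h1 : (volume.restrict (Set.Icc (0:ℝ) T)) Nᶜ = 0 := by
      rw [ae_iff] at hae0
      exact hae0
    rw [Measure.restrict_apply hNm.compl] at h1
    rw [Set.diff_eq, Set.inter_comm]
    exact h1
  refine ⟨N, hNvol, f', ?_⟩
  intro t ht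
  have hsliceA : ∀ᵐ x ∂m, (t, x) ∈ A := by
    rw [ae_iff]
    exact ht.1
  constructor
  · filter_upwards [hsliceA] with x hx
    refine (hA2 x t hx).hasDerivWithinAt.congr ?_ ?_
    · intro y hy
      show f y x = g y x
      simp only [hg_def]
      rw [hproj_eq y hy]
    · show f t x = g t x
      simp only [hg_def]
      rw [hproj_eq t ht.2]
  · intro μ hμ hac
    haveI := hμ
    have hsliceμ : ∀ᵐ x ∂μ, (t, x) ∈ A := hac.ae_le hsliceA
    have hfint : ∀ r ∈ Set.Icc (0:ℝ) T, Integrable (f r) μ := fun r hr =>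
      (integrable_const Cf).mono' (hfm r).aestronglyMeasurable
        (ae_of_all _ fun x => by rw [Real.norm_eq_abs]; exact hCf r hr x)
    rw [hasDerivWithinAt_iff_tendsto_slope]
    have h1 : Filter.Tendsto (fun s => ∫ x, (f s x - f t x) / (s - t) ∂μ)
        (𝓝[Set.Icc (0:ℝ) T \ {t}] t) (𝓝 (∫ x, f' t x ∂μ)) := by
      refine tendsto_integral_filter_of_dominated_convergence (fun _ => Lstar)
        ?_ ?_ (integrable_const _) ?_
      · exact Filter.Eventually.of_forall fun s =>
          (((hfm s).sub (hfm t)).div_const _).aestronglyMeasurable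
      · filter_upwards [self_mem_nhdsWithin] with s hs
        refine ae_of_all _ fun x => ?_
        have hst : s ≠ t := hs.2
        rw [Real.norm_eq_abs, abs_div, div_le_iff₀ (abs_pos.2 (sub_ne_zero.2 hst))]
        exact hlip t ht.2 s hs.1 x
      · filter_upwards [hsliceμ] with x hx
        have hd := hA2 x t hx
        rw [hasDerivAt_iff_tendsto_slope] at hd
        have hmono : 𝓝[Set.Icc (0:ℝ) T \ {t}] t ≤ 𝓝[≠] t :=
          nhdsWithin_mono t fun y hy => hy.2
        refine (hd.mono_left hmono).congr' ?_
        filter_upwards [self_mem_nhdsWithin] with s hs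
        rw [slope_def_field]
        show (g s x - g t x) / (s - t) = (f s x - f t x) / (s - t)
        rw [show g s x = f s x from by simp only [hg_def]; rw [hproj_eq s hs.1],
          show g t x = f t x from by simp only [hg_def]; rw [hproj_eq t ht.2]]
    have h2 : (fun s => ∫ x, (f s x - f t x) / (s - t) ∂μ)
        =ᶠ[𝓝[Set.Icc (0:ℝ) T \ {t}] t] slope (fun r => ∫ x, f r x ∂μ) t := by
      filter_upwards [self_mem_nhdsWithin] with s hs
      rw [slope_def_field, ← integral_sub (hfint s hs.1) (hfint t ht.2), ← integral_div]
    exact Filter.Tendsto.congr' h2 h1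

end MyPart5

/-- Basic properties of the time-dependent relative entropy:
time-independent domain, uniform lower bound, decomposition
`S_t(μ) = Ent(μ|m) + ∫ f_t dμ` with Lipschitz dependence on `t`, and a common
full-measure set of differentiability points with derivative `∫ ∂_t f_t dμ`. -/
theorem entropy_properties {X : Type*} [TopologicalSpace X] [MeasurableSpace X]
    [BorelSpace X] {T L : ℝ} (hT : 0 < T) (hL : 0 ≤ L) (D : DynMetric X T L)
    (m : Measure X) (hm : IsProbabilityMeasure m)
    (f : ℝ → X → ℝ) (hfm : ∀ t, Measurable (f t))
    (Cf : ℝ) (hCf : ∀ t ∈ Set.Icc (0:ℝ) T, ∀ x : X, |f t x| ≤ Cf)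
    (Lstar : ℝ) (hLstar : 0 ≤ Lstar)
    (hlip : ∀ s ∈ Set.Icc (0:ℝ) T, ∀ t ∈ Set.Icc (0:ℝ) T, ∀ x : X,
      |f t x - f s x| ≤ Lstar * |t - s|) :
    (∀ s ∈ Set.Icc (0:ℝ) T, ∀ t ∈ Set.Icc (0:ℝ) T, ∀ μ : Measure X, MemP2 D μ →
      (entS m f s μ < ⊤ ↔ entS m f t μ < ⊤)) ∧
    (∀ t ∈ Set.Icc (0:ℝ) T, ∀ μ : Measure X, MemP2 D μ →
      ((-Cf : ℝ) : EReal) ≤ entS m f t μ) ∧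
    (∀ t ∈ Set.Icc (0:ℝ) T, ∀ μ : Measure X, MemP2 D μ →
      entS m f t μ = relEnt μ m + ((∫ x, f t x ∂μ : ℝ) : EReal)) ∧
    (∀ μ : Measure X, MemP2 D μ → (∃ t₀ ∈ Set.Icc (0:ℝ) T, entS m f t₀ μ < ⊤) →
      ∀ s ∈ Set.Icc (0:ℝ) T, ∀ t ∈ Set.Icc (0:ℝ) T,
        |(entS m f t μ).toReal - (entS m f s μ).toReal| ≤ Lstar * |t - s|) ∧
    ∃ N : Set ℝ, volume (Set.Icc (0:ℝ) T \ N) = 0 ∧ ∃ f' : ℝ → X → ℝ,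
      ∀ t ∈ N ∩ Set.Icc (0:ℝ) T,
        (∀ᵐ x ∂m, HasDerivWithinAt (fun r => f r x) (f' t x) (Set.Icc (0:ℝ) T) t) ∧
        ∀ μ : Measure X, MemP2 D μ → entS m f t μ < ⊤ →
          HasDerivWithinAt (fun r => (entS m f r μ).toReal)
            (∫ x, f' t x ∂μ) (Set.Icc (0:ℝ) T) t := by
  
  haveI := hm
  have hfin : ∀ t ∈ Set.Icc (0:ℝ) T, ∀ μ : Measure X, IsProbabilityMeasure μ →
      (entS m f t μ < ⊤ ↔ (μ ≪ m ∧ Integrable (llr μ m) μ)) := by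
    intro t ht μ hμ
    haveI := hμ
    exact myEntS_lt_top_iff m f t (hfm t) Cf (fun x => hCf t ht x) μ
  have key3 : ∀ t ∈ Set.Icc (0:ℝ) T, ∀ μ : Measure X, IsProbabilityMeasure μ →
      entS m f t μ = relEnt μ m + ((∫ x, f t x ∂μ : ℝ) : EReal) := by
    intro t ht μ hμ
    haveI := hμ
    exact myEntS_eq m f t (hfm t) Cf (fun x => hCf t ht x) μ
  have hfint : ∀ (μ : Measure X), IsProbabilityMeasure μ → ∀ r ∈ Set.Icc (0:ℝ) T,
      Integrable (f r) μ := by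
    intro μ hμ r hr
    haveI := hμ
    exact (integrable_const Cf).mono' (hfm r).aestronglyMeasurable
      (ae_of_all _ fun x => by rw [Real.norm_eq_abs]; exact hCf r hr x)
  refine ⟨?_, ?_, ?_, ?_, ?_⟩
  · intro s hs t ht μ hμ
    rw [hfin s hs μ hμ.1, hfin t ht μ hμ.1]
  · intro t ht μ hμ
    haveI := hμ.1
    by_cases h : μ ≪ m ∧ Integrable (llr μ m) μ
    · have hrel : relEnt μ m = ((∫ x, llr μ m x ∂μ : ℝ) : EReal) := by
        rw [relEnt, show (fun x => Real.log ((μ.rnDeriv m x).toReal)) = llr μ m from rfl,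
          if_pos h]
      rw [key3 t ht μ hμ.1, hrel, ← EReal.coe_add, EReal.coe_le_coe_iff]
      have h1 : 0 ≤ ∫ x, llr μ m x ∂μ := myRelEnt_nonneg m μ h.1 h.2
      have h2 : ∫ x, (-Cf : ℝ) ∂μ ≤ ∫ x, f t x ∂μ :=
        integral_mono (integrable_const _) (hfint μ hμ.1 t ht)
          (fun x => (abs_le.1 (hCf t ht x)).1)
      simp only [integral_const, measure_univ, probReal_univ, ENNReal.toReal_one, smul_eq_mul, one_mul] at h2
      linarith
    · have htop : entS m f t μ = ⊤ :=
        top_le_iff.1 (not_lt.1 (fun hlt => h ((hfin t ht μ hμ.1).1 hlt)))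
      rw [htop]
      exact le_top
  · intro t ht μ hμ
    exact key3 t ht μ hμ.1
  · intro μ hμ h₀ s hs t ht
    haveI := hμ.1
    obtain ⟨t₀, ht₀, hfin₀⟩ := h₀
    have h := (hfin t₀ ht₀ μ hμ.1).1 hfin₀
    have hrel : relEnt μ m = ((∫ x, llr μ m x ∂μ : ℝ) : EReal) := by
      rw [relEnt, show (fun x => Real.log ((μ.rnDeriv m x).toReal)) = llr μ m from rfl,
        if_pos h]
    have hval : ∀ r, r ∈ Set.Icc (0:ℝ) T →
        (entS m f r μ).toReal = (∫ x, llr μ m x ∂μ) + ∫ x, f r x ∂μ := by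
      intro r hr
      rw [key3 r hr μ hμ.1, hrel, ← EReal.coe_add, EReal.toReal_coe]
    rw [hval t ht, hval s hs, add_sub_add_left_eq_sub,
      ← integral_sub (hfint μ hμ.1 t ht) (hfint μ hμ.1 s hs)]
    calc |∫ x, (f t x - f s x) ∂μ| ≤ ∫ x, |f t x - f s x| ∂μ := by
          simpa [Real.norm_eq_abs] using
            norm_integral_le_integral_norm (fun x => f t x - f s x) (μ := μ)
      _ ≤ ∫ _x, Lstar * |t - s| ∂μ :=
          integral_mono ((hfint μ hμ.1 t ht).sub (hfint μ hμ.1 s hs)).abs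
            (integrable_const _) (fun x => hlip s hs t ht x)
      _ = Lstar * |t - s| := by
          simp [integral_const, measure_univ]
  · obtain ⟨N, hN, f', hNf⟩ := myPart5 m hT hLstar f hfm hCf hlip
    refine ⟨N, hN, f', fun t ht => ⟨(hNf t ht).1, ?_⟩⟩
    intro μ hμ htop
    haveI := hμ.1
    have hcond := (hfin t ht.2 μ hμ.1).1 htop
    have hrel : relEnt μ m = ((∫ x, llr μ m x ∂μ : ℝ) : EReal) := by
      rw [relEnt, show (fun x => Real.log ((μ.rnDeriv m x).toReal)) = llr μ m from rfl,
        if_pos hcond]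
    have hval : ∀ r ∈ Set.Icc (0:ℝ) T,
        (entS m f r μ).toReal = (∫ x, llr μ m x ∂μ) + ∫ x, f r x ∂μ := by
      intro r hr
      rw [key3 r hr μ hμ.1, hrel, ← EReal.coe_add, EReal.toReal_coe]
    have hD := ((hNf t ht).2 μ hμ.1 hcond.1).const_add (∫ x, llr μ m x ∂μ)
    exact hD.congr (fun y hy => hval y hy) (hval t ht.2)
end
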